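/- Let 𝒰 be the structure with domain {0,1}^ω and, for each σ ∈ {0,1}^{<ω}, a unary relation U_σ interpreted so that U_σ(α) holds if and only if σ is an initial segment of α. Suppose M is an ℵ₁-saturated L-structure and there is a family (X_σ)_{σ ∈ {0,1}^{<ω}} of nonempty subsets of M, each definable with parameters in M, such that for every σ ∈ {0,1}^{<ω}: X_{σ⌢0} ⊆ X_σ, X_{σ⌢1} ⊆ X_σ, and X_{σ⌢0} ∩ X_{σ⌢1} = ∅. Then M trace defines 𝒰 via some injection τ : {0,1}^ω → M. (Hence a theory that is not totally transcendental trace defines 𝒰.) -/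

import Mathlib

open FirstOrder FirstOrder.Language

/-- `M` trace defines `O` via the injection `τ : O → M^m`. -/
def TraceDefinesVia (L L' : Language) (M : Type*) (O : Type*)
    [L.Structure M] [L'.Structure O] (m : ℕ) (τ : O → Fin m → M) : Prop :=
  ∀ (n : ℕ) (X : Set (Fin n → O)), Set.Definable (Set.univ : Set O) L' X →
    ∃ Y : Set (Fin n × Fin m → M), Set.Definable (Set.univ : Set M) L Y ∧
      ∀ a : Fin n → O, a ∈ X ↔ (fun p : Fin n × Fin m => τ (a p.1) p.2) ∈ Y

/-- `M` is `ℵ₁`-saturated: every countable finitely realized set of formulas in one free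
variable with parameters from `M` is realized in `M`. -/
def Aleph1Saturated (L : Language) (M : Type*) [L.Structure M] : Prop :=
  ∀ Sig : Set (L[[(Set.univ : Set M)]].Formula (Fin 1)), Sig.Countable →
    (∀ s : Finset (L[[(Set.univ : Set M)]].Formula (Fin 1)), ↑s ⊆ Sig →
      ∃ a : Fin 1 → M, ∀ φ ∈ s, Formula.Realize φ a) →
    ∃ a : Fin 1 → M, ∀ φ ∈ Sig, Formula.Realize φ a

/-- The relation symbols of the language of the binary tree structure: one unary relation `U_σ`
for each finite binary string `σ`. -/
inductive treeRel : ℕ → Type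
  | U : List Bool → treeRel 1

/-- The language of the binary tree structure `𝒰`. -/
def treeLang : Language := ⟨fun _ => Empty, treeRel⟩

/-- The structure `𝒰` on Cantor space `{0,1}^ω`, where `U_σ(α)` holds iff `σ` is an initial
segment of `α`. -/
instance : treeLang.Structure (ℕ → Bool) where
  funMap := fun {_} f => nomatch f
  RelMap := fun {n} R x =>
    match n, R with
    | 1, .U σ => ∀ i : Fin σ.length, σ.get i = x 0 i

namespace TTAux

abbrev Cantor := ℕ → Bool

/-! ### Finite prefixes -/

def pre (α : Cantor) (n : ℕ) : List Bool := List.ofFn (fun i : Fin n => α i)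

@[simp] lemma length_pre (α : Cantor) (n : ℕ) : (pre α n).length = n := by simp [pre]

@[simp] lemma getElem_pre (α : Cantor) (n : ℕ) (i : ℕ) (h : i < (pre α n).length) :
    (pre α n)[i] = α i := by simp [pre]

lemma pre_succ (α : Cantor) (n : ℕ) : pre α (n+1) = pre α n ++ [α n] := by
  apply List.ext_getElem (by simp)
  intro i h1 h2
  simp only [length_pre] at h1
  rcases Nat.lt_or_ge i n with h | h
  · rw [getElem_pre, List.getElem_append_left (by simpa using h), getElem_pre]
  · have : i = n := by omega
    subst this
    simp

lemma take_pre (α : Cantor) {n k : ℕ} (h : n ≤ k) : (pre α k).take n = pre α n := by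
  apply List.ext_getElem (by simp [h])
  intro i h1 h2
  simp [List.getElem_take]

lemma prefix_pre (α : Cantor) {n k : ℕ} (h : n ≤ k) : pre α n <+: pre α k := by
  rw [← take_pre α h]; exact List.take_prefix _ _

/-- `σ` is an initial segment of `α`. -/
def Pref (s : List Bool) (α : Cantor) : Prop := pre α s.length = s

lemma pref_pre (α : Cantor) (k : ℕ) : Pref (pre α k) α := by
  rw [Pref, length_pre]

lemma prefix_pre_of_pref {s : List Bool} {α : Cantor} {k : ℕ} (hs : Pref s α)
    (h : s.length ≤ k) : s <+: pre α k := hs ▸ prefix_pre α h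

lemma pref_of_prefix_pre {s : List Bool} {α : Cantor} {k : ℕ} (hp : s <+: pre α k) :
    Pref s α := by
  have h : s.length ≤ k := by simpa using hp.length_le
  rw [Pref, ← take_pre α h]
  exact (List.prefix_iff_eq_take.mp hp).symm

lemma pref_iff_forall {s : List Bool} {α : Cantor} :
    Pref s α ↔ ∀ i : Fin s.length, s.get i = α i := by
  constructor
  · intro h i
    have h2 : (i : ℕ) < s.length := i.2
    have := List.getElem_of_eq h.symm h2
    simp only [getElem_pre] at this
    simpa [List.get_eq_getElem] using this
  · intro h
    apply List.ext_getElem (by simp)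
    intro i h1 h2
    rw [getElem_pre]
    exact (h ⟨i, h2⟩).symm

/-! ### Trees of sets -/

section XLemmas
variable {M : Type*}

lemma subset_of_prefix (X : List Bool → Set M)
    (hsub : ∀ (σ : List Bool) (b : Bool), X (σ ++ [b]) ⊆ X σ)
    {s t : List Bool} (h : s <+: t) : X t ⊆ X s := by
  obtain ⟨u, rfl⟩ := h
  induction u using List.reverseRecOn with
  | nil => simp
  | append_singleton u b ih =>
    intro m hm
    rw [← List.append_assoc] at hm
    exact ih (hsub (s ++ u) b hm)

lemma disjoint_same_length :
    ∀ (s t : List Bool) (X : List Bool → Set M),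
      (∀ (σ : List Bool) (b : Bool), X (σ ++ [b]) ⊆ X σ) →
      (∀ σ : List Bool, X (σ ++ [false]) ∩ X (σ ++ [true]) = ∅) →
      s.length = t.length → s ≠ t → ∀ m, m ∈ X s → m ∈ X t → False := by
  intro s
  induction s with
  | nil =>
    intro t X _ _ hl hne
    cases t with
    | nil => exact absurd rfl hne
    | cons a t => simp at hl
  | cons a s ih =>
    intro t X hsub hdisj hl hne m hms hmt
    cases t with
    | nil => simp at hl
    | cons a' t =>
      by_cases hb : a = a'
      · subst hb
        refine ih t (fun u => X (a :: u)) (fun σ b => ?_) (fun σ => ?_)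
          (by simpa using hl) (fun h => hne (by rw [h])) m hms hmt
        · simpa [List.cons_append] using hsub (a :: σ) b
        · simpa [List.cons_append] using hdisj (a :: σ)
      · have h1 : m ∈ X [a] := subset_of_prefix X hsub ⟨s, rfl⟩ hms
        have h2 : m ∈ X [a'] := subset_of_prefix X hsub ⟨t, rfl⟩ hmt
        have hd := hdisj []
        rw [Set.eq_empty_iff_forall_notMem] at hd
        cases a <;> cases a' <;>
          first
          | exact hb rfl
          | exact hd m ⟨by simpa using h1, by simpa using h2⟩
          | exact hd m ⟨by simpa using h2, by simpa using h1⟩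

lemma infinite_X (X : List Bool → Set M)
    (hsub : ∀ (σ : List Bool) (b : Bool), X (σ ++ [b]) ⊆ X σ)
    (hdisj : ∀ σ : List Bool, X (σ ++ [false]) ∩ X (σ ++ [true]) = ∅)
    (hne : ∀ σ : List Bool, (X σ).Nonempty) (s : List Bool) : (X s).Infinite := by
  classical
  have hfg : ∀ j : ℕ, (hne (s ++ List.replicate j false ++ [true])).choose ∈
      X (s ++ List.replicate j false ++ [true]) :=
    fun j => (hne (s ++ List.replicate j false ++ [true])).choose_spec
  set f : ℕ → M := fun j => (hne (s ++ List.replicate j false ++ [true])).choose with hf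
  have key : ∀ j j', j < j' → f j = f j' → False := by
    intro j j' hlt heq
    have h1 : f j ∈ X (s ++ List.replicate j false ++ [true]) := hfg j
    have h2 : f j ∈ X (s ++ List.replicate j' false ++ [true]) := heq ▸ hfg j'
    have hr : List.replicate j false ++ [false] ++ List.replicate (j' - (j+1)) false
        = List.replicate j' false := by
      have h1' : [false] = List.replicate 1 false := rfl
      rw [h1', ← List.replicate_add, ← List.replicate_add]
      congr 1
      omega
    have hpre : (s ++ List.replicate j false ++ [false]) <+:
        (s ++ List.replicate j' false ++ [true]) := by
      refine ⟨List.replicate (j' - (j+1)) false ++ [true], ?_⟩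
      rw [← hr]
      simp [List.append_assoc]
    have h3 : f j ∈ X (s ++ List.replicate j false ++ [false]) :=
      subset_of_prefix X hsub hpre h2
    have hd := hdisj (s ++ List.replicate j false)
    rw [Set.eq_empty_iff_forall_notMem] at hd
    exact hd (f j) ⟨h3, h1⟩
  have hinj : Function.Injective f := by
    intro j j' h
    rcases lt_trichotomy j j' with hl | hl | hl
    · exact absurd h (fun h => key j j' hl h)
    · exact hl
    · exact absurd h.symm (fun h => key j' j hl h)
  apply Set.infinite_of_injective_forall_mem hinj
  intro j
  exact subset_of_prefix X hsub
    ⟨List.replicate j false ++ [true], by rw [List.append_assoc]⟩ (hfg j)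

end XLemmas

/-! ### Cantor space facts -/

def extC (s : List Bool) (β : Cantor) : Cantor :=
  fun n => if h : n < s.length then s[n] else β (n - s.length)

lemma pref_extC (s : List Bool) (β : Cantor) : Pref s (extC s β) := by
  apply List.ext_getElem (by simp)
  intro i h1 h2
  rw [getElem_pre]
  simp only [length_pre] at h1
  simp [extC, h1]

lemma extC_injective (s : List Bool) : Function.Injective (extC s) := by
  intro β β' h
  funext n
  have := congrFun h (n + s.length)
  simpa [extC] using this

noncomputable def natToCantor (j : ℕ) : Cantor := fun n => decide (n = j)

lemma natToCantor_injective : Function.Injective natToCantor := by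
  intro j j' h
  have := congrFun h j
  simp [natToCantor] at this
  exact this

lemma infinite_pref (s : List Bool) : {α : Cantor | Pref s α}.Infinite :=
  Set.infinite_of_injective_forall_mem
    (f := fun j : ℕ => extC s (natToCantor j))
    (fun j j' h => natToCantor_injective (extC_injective s h))
    (fun j => pref_extC s _)

/-! ### All strings of a given length -/

def allStr : ℕ → List (List Bool)
  | 0 => [([] : List Bool)]
  | k+1 => (allStr k).flatMap (fun s => [s ++ [false], s ++ [true] ])

lemma mem_allStr (s : List Bool) (k : ℕ) : s ∈ allStr k ↔ s.length = k := by
  induction k generalizing s with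
  | zero =>
    simp only [allStr, List.mem_singleton, List.length_eq_zero_iff]
  | succ k ih =>
    simp only [allStr, List.mem_flatMap]
    constructor
    · rintro ⟨t, ht, hs⟩
      have := (ih t).mp ht
      simp only [List.mem_cons, List.not_mem_nil, or_false, List.mem_singleton] at hs
      rcases hs with hs | hs <;> subst hs <;> simp [this]
    · intro hs
      have hne : s ≠ [] := by rintro rfl; simp at hs
      refine ⟨s.dropLast, (ih _).mpr (by simp [hs]), ?_⟩
      have hds := List.dropLast_append_getLast hne
      simp only [List.mem_cons, List.not_mem_nil, or_false, List.mem_singleton]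
      cases hgl : s.getLast hne with
      | false => rw [hgl] at hds; exact Or.inl hds.symm
      | true => rw [hgl] at hds; exact Or.inr hds.symm

/-! ### The correspondence relation -/

section Good
variable {M : Type*} (X : List Bool → Set M) (τ : Cantor → Fin 1 → M)

def Good (k : ℕ) (C : Finset Cantor) (α : Cantor) (m : M) : Prop :=
  (∀ s : List Bool, s.length ≤ k → (Pref s α ↔ m ∈ X s)) ∧
    ∀ c ∈ C, (α = c ↔ m = τ c 0)

def Dset (k : ℕ) : Set M := {m | ∃ s : List Bool, s.length = k ∧ m ∈ X s}

variable {X τ}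
variable (hsub : ∀ (σ : List Bool) (b : Bool), X (σ ++ [b]) ⊆ X σ)
  (hdisj : ∀ σ : List Bool, X (σ ++ [false]) ∩ X (σ ++ [true]) = ∅)
  (hne : ∀ σ : List Bool, (X σ).Nonempty)
  (hτ : ∀ (α : Cantor) (n : ℕ), τ α 0 ∈ X (pre α n))
  (hτ0 : ∀ α β : Cantor, τ α 0 = τ β 0 → α = β)

include hsub hdisj hτ hτ0 in
lemma good_tau (k : ℕ) (C : Finset Cantor) (α : Cantor) : Good X τ k C α (τ α 0) := by
  constructor
  · intro s _
    constructor
    · intro hp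
      have : X (pre α s.length) ⊆ X s := by rw [hp]
      exact this (hτ α s.length)
    · intro hm
      by_contra hp
      refine disjoint_same_length s (pre α s.length) X hsub hdisj (by simp)
        (fun h => hp ?_) (τ α 0) hm (hτ α s.length)
      rw [Pref, ← h]
  · intro c _
    constructor
    · rintro rfl; rfl
    · intro h; exact hτ0 _ _ h

include hsub hdisj hne hτ hτ0 in
lemma extendM {J : Type*} [Finite J] (k : ℕ) (C : Finset Cantor)
    (A : J → Cantor) (B : J → M)
    (H1 : ∀ j, Good X τ k C (A j) (B j))
    (H2 : ∀ j j', A j = A j' ↔ B j = B j')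
    (m : M) (hm : m ∈ Dset X k) :
    ∃ α : Cantor, Good X τ k C α m ∧ ∀ j, (A j = α ↔ B j = m) := by
  classical
  by_cases hj : ∃ j, B j = m
  · obtain ⟨j0, rfl⟩ := hj
    exact ⟨A j0, H1 j0, fun j => H2 j j0⟩
  by_cases hc : ∃ c ∈ C, τ c 0 = m
  · obtain ⟨c, hcC, rfl⟩ := hc
    exact ⟨c, good_tau hsub hdisj hτ hτ0 k C c, fun j => (H1 j).2 c hcC⟩
  obtain ⟨s, hsl, hms⟩ := hm
  have hfin : ({α : Cantor | Pref s α} \ ((↑C : Set Cantor) ∪ Set.range A)).Nonempty := by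
    apply Set.Infinite.nonempty
    apply Set.Infinite.diff (infinite_pref s)
    exact (C.finite_toSet.union (Set.finite_range A))
  obtain ⟨α, hαs, hα⟩ := hfin
  rw [Set.mem_union, not_or] at hα
  refine ⟨α, ⟨?_, ?_⟩, ?_⟩
  · intro σ hσk
    have hsα : s = pre α k := by
      have := hαs
      rw [Set.mem_setOf_eq, Pref, hsl] at this
      exact this.symm
    constructor
    · intro hp
      have hpre : σ <+: s := by rw [hsα]; exact prefix_pre_of_pref hp hσk
      exact subset_of_prefix X hsub hpre hms
    · intro hmσ
      by_contra hp
      have h1 : Pref (s.take σ.length) α := by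
        rw [hsα, take_pre α hσk]
        exact pref_pre α σ.length
      have hlen : σ.length = (s.take σ.length).length := by
        simp [hsl, hσk]
      have hne' : σ ≠ s.take σ.length := by
        intro h; rw [h] at hp; exact hp h1
      have hmtake : m ∈ X (s.take σ.length) :=
        subset_of_prefix X hsub (List.take_prefix _ _) hms
      exact disjoint_same_length σ (s.take σ.length) X hsub hdisj hlen hne' m hmσ hmtake
  · intro c hcC
    constructor
    · rintro rfl
      exact (hα.1 (Finset.mem_coe.mpr hcC)).elim
    · intro h
      exact absurd ⟨c, hcC, h.symm⟩ hc
  · intro j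
    constructor
    · intro h
      exact absurd ⟨j, h⟩ hα.2
    · intro h
      exact absurd ⟨j, h⟩ hj

include hsub hdisj hne hτ hτ0 in
lemma extendC {J : Type*} [Finite J] (k : ℕ) (C : Finset Cantor)
    (A : J → Cantor) (B : J → M)
    (H1 : ∀ j, Good X τ k C (A j) (B j))
    (H2 : ∀ j j', A j = A j' ↔ B j = B j')
    (α : Cantor) :
    ∃ m : M, m ∈ Dset X k ∧ Good X τ k C α m ∧ ∀ j, (A j = α ↔ B j = m) := by
  classical
  by_cases hj : ∃ j, A j = α
  · obtain ⟨j0, rfl⟩ := hj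
    refine ⟨B j0, ?_, H1 j0, fun j => H2 j j0⟩
    exact ⟨pre (A j0) k, by simp, ((H1 j0).1 _ (by simp)).mp (pref_pre _ k)⟩
  by_cases hcα : α ∈ C
  · refine ⟨τ α 0, ⟨pre α k, by simp, hτ α k⟩, good_tau hsub hdisj hτ hτ0 k C α, fun j => ?_⟩
    exact (H1 j).2 α hcα
  have hfin : (X (pre α k) \ (Set.range B ∪ (fun c => τ c 0) '' (↑C : Set Cantor))).Nonempty := by
    apply Set.Infinite.nonempty
    apply Set.Infinite.diff (infinite_X X hsub hdisj hne _)
    exact (Set.finite_range B).union (C.finite_toSet.image _)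
  obtain ⟨m, hmX, hm⟩ := hfin
  rw [Set.mem_union, not_or] at hm
  refine ⟨m, ⟨pre α k, by simp, hmX⟩, ⟨?_, ?_⟩, ?_⟩
  · intro σ hσk
    constructor
    · intro hp
      exact subset_of_prefix X hsub (prefix_pre_of_pref hp hσk) hmX
    · intro hmσ
      by_contra hp
      have h1 : Pref (pre α σ.length) α := pref_pre α σ.length
      have hne' : σ ≠ pre α σ.length := fun h => hp (by rw [h]; exact h1)
      exact disjoint_same_length σ (pre α σ.length) X hsub hdisj (by simp) hne' m hmσ
        (subset_of_prefix X hsub (prefix_pre α hσk) hmX)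
  · intro c hcC
    constructor
    · rintro rfl; exact absurd hcC hcα
    · rintro rfl
      exact absurd (Set.mem_image_of_mem _ (by simpa using hcC)) hm.2
  · intro j
    constructor
    · intro h; exact absurd ⟨j, h⟩ hj
    · rintro rfl
      exact absurd (Set.mem_range_self j) hm.1

end Good

/-! ### Syntactic helpers -/

section Syntactic

lemma term_cases {γ : Type*} (t : (treeLang[[(Set.univ : Set Cantor)]]).Term γ) :
    (∃ j, t = Term.var j) ∨ (∃ c : Cantor, ∀ v : γ → Cantor, t.realize v = c) := by
  cases t with
  | var j => exact Or.inl ⟨j, rfl⟩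
  | @func arity f ts =>
    right
    rcases f with f | c
    · exact f.elim
    · match arity, c with
      | 0, c =>
        refine ⟨(c : Cantor), fun v => ?_⟩
        have : (Structure.funMap (L := treeLang[[(Set.univ : Set Cantor)]])
            (Sum.inr c) fun i : Fin 0 => Term.realize v (ts i)) = (c : Cantor) := by
          erw [withConstants_funMap_sumInr]
          rfl
        exact this

lemma realize_zero_congr {L' : Language} {M' : Type*} [L'.Structure M'] {γ : Type*}
    (φ : L'.BoundedFormula γ 0) (v : γ → M') (xs ys : Fin 0 → M') :
    φ.Realize v xs ↔ φ.Realize v ys := by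
  rw [Subsingleton.elim xs ys]

lemma realize_relabel_const {L' : Language} {M' : Type*} [L'.Structure M'] {β : Type*} {l : ℕ}
    (φ : L'.Formula (Fin 1)) (j : β ⊕ Fin l) (b : β → M') (ys : Fin l → M') :
    (BoundedFormula.relabel (fun _ : Fin 1 => j) φ :
        L'.BoundedFormula β l).Realize b ys ↔
      Formula.Realize φ (fun _ => Sum.elim b ys j) := by
  have H := BoundedFormula.realize_relabel (M := M') (φ := φ)
    (g := fun _ : Fin 1 => j) (v := b) (xs := ys)
  rw [H]
  have hv : (Sum.elim b (ys ∘ Fin.castAdd 0) ∘ (fun _ : Fin 1 => j)) =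
      fun _ : Fin 1 => Sum.elim b ys j := by
    funext x
    simp only [Function.comp_apply]
    cases j <;> rfl
  rw [hv, Formula.Realize]
  apply iff_of_eq
  congr 1
  exact Subsingleton.elim _ _

variable {L : Language} {M : Type*} [L.Structure M]

/-- variable terms on the `M` side -/
def vterm (n l : ℕ) (j : Fin n ⊕ Fin l) :
    L[[(Set.univ : Set M)]].Term ((Fin n × Fin 1) ⊕ Fin l) :=
  Sum.elim (fun i => Term.var (Sum.inl (i, (0 : Fin 1)))) (fun x => Term.var (Sum.inr x)) j

@[simp] lemma realize_vterm {n l : ℕ} (b : Fin n × Fin 1 → M) (ys : Fin l → M)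
    (j : Fin n ⊕ Fin l) :
    (vterm (L := L) (M := M) n l j).realize (Sum.elim b ys) =
      Sum.elim (fun i => b (i, 0)) ys j := by
  cases j <;> rfl

/-- constant terms on the `M` side -/
def cterm {γ : Type*} (m : M) : L[[(Set.univ : Set M)]].Term γ :=
  (L.con (⟨m, Set.mem_univ m⟩ : (Set.univ : Set M))).term

@[simp] lemma realize_cterm {γ : Type*} (m : M) (v : γ → M) :
    (cterm (L := L) m).realize v = m := by
  simp [cterm]

/-- formula defining the union of the sets at level `k` -/
noncomputable def deltaFormula (φX : List Bool → L[[(Set.univ : Set M)]].Formula (Fin 1))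
    (k : ℕ) : L[[(Set.univ : Set M)]].Formula (Fin 1) :=
  ((allStr k).map φX).foldr (· ⊔ ·) ⊥

lemma realize_deltaFormula {X : List Bool → Set M}
    {φX : List Bool → L[[(Set.univ : Set M)]].Formula (Fin 1)}
    (hφX : ∀ σ (v : Fin 1 → M), Formula.Realize (φX σ) v ↔ v 0 ∈ X σ)
    (k : ℕ) (v : Fin 1 → M) :
    Formula.Realize (deltaFormula φX k) v ↔ v 0 ∈ Dset X k := by
  rw [Formula.Realize, deltaFormula, BoundedFormula.realize_foldr_sup]
  constructor
  · rintro ⟨φ, hφ, hr⟩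
    rw [List.mem_map] at hφ
    obtain ⟨s, hs, rfl⟩ := hφ
    exact ⟨s, (mem_allStr s k).mp hs, (hφX s v).mp hr⟩
  · rintro ⟨s, hs, hm⟩
    exact ⟨φX s, List.mem_map.mpr ⟨s, (mem_allStr s k).mpr hs, rfl⟩, (hφX s v).mpr hm⟩

end Syntactic

/-! ### Index juggling for the quantifier case -/

section Snoc
variable {n l : ℕ} {β : Type*}

lemma elim_snoc_map (a : Fin n → β) (xs : Fin l → β) (x : β) (j : Fin n ⊕ Fin l) :
    Sum.elim a (Fin.snoc xs x) (Sum.map id Fin.castSucc j) = Sum.elim a xs j := by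
  cases j with
  | inl i => rfl
  | inr v => simp [Fin.snoc_castSucc]

lemma sum_fin_succ_cases (j : Fin n ⊕ Fin (l+1)) :
    (∃ j₀ : Fin n ⊕ Fin l, j = Sum.map id Fin.castSucc j₀) ∨ j = Sum.inr (Fin.last l) := by
  rcases j with i | v
  · exact Or.inl ⟨Sum.inl i, rfl⟩
  · induction v using Fin.lastCases with
    | last => exact Or.inr rfl
    | cast w => exact Or.inl ⟨Sum.inr w, rfl⟩

lemma elim_snoc_last (a : Fin n → β) (xs : Fin l → β) (x : β) :
    Sum.elim a (Fin.snoc xs x) (Sum.inr (Fin.last l)) = x := by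
  simp

end Snoc

/-! ### The key translation lemma -/

section Key

variable {L : Language} {M : Type*} [L.Structure M]

theorem key_translation
    (X : List Bool → Set M)
    (φX : List Bool → L[[(Set.univ : Set M)]].Formula (Fin 1))
    (hφX : ∀ σ (v : Fin 1 → M), Formula.Realize (φX σ) v ↔ v 0 ∈ X σ)
    (hsub : ∀ (σ : List Bool) (b : Bool), X (σ ++ [b]) ⊆ X σ)
    (hdisj : ∀ σ : List Bool, X (σ ++ [false]) ∩ X (σ ++ [true]) = ∅)
    (hne : ∀ σ : List Bool, (X σ).Nonempty)
    (τ : Cantor → Fin 1 → M)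
    (hτ : ∀ (α : Cantor) (n : ℕ), τ α 0 ∈ X (pre α n))
    (hτ0 : ∀ α β : Cantor, τ α 0 = τ β 0 → α = β)
    (n : ℕ) :
    ∀ (l : ℕ) (ψ : (treeLang[[(Set.univ : Set Cantor)]]).BoundedFormula (Fin n) l),
    ∃ (k : ℕ) (C : Finset Cantor), ∀ k', k ≤ k' → ∀ C' : Finset Cantor, C ⊆ C' →
    ∃ θ : L[[(Set.univ : Set M)]].BoundedFormula (Fin n × Fin 1) l,
    ∀ (a : Fin n → Cantor) (xs : Fin l → Cantor) (b : Fin n × Fin 1 → M) (ys : Fin l → M),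
      (∀ j : Fin n ⊕ Fin l, Good X τ k' C' (Sum.elim a xs j)
        (Sum.elim (fun i => b (i, (0 : Fin 1))) ys j)) →
      (∀ j j' : Fin n ⊕ Fin l, Sum.elim a xs j = Sum.elim a xs j' ↔
        Sum.elim (fun i => b (i, (0 : Fin 1))) ys j
          = Sum.elim (fun i => b (i, (0 : Fin 1))) ys j') →
      (ψ.Realize a xs ↔ θ.Realize b ys) := by
  classical
  intro l ψ
  induction ψ with
  | falsum =>
    exact ⟨0, ∅, fun k' _ C' _ => ⟨⊥, fun a xs b ys _ _ => Iff.rfl⟩⟩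
  | @equal l t₁ t₂ =>
    rcases term_cases t₁ with ⟨j₁, rfl⟩ | ⟨c₁, hc₁⟩ <;>
      rcases term_cases t₂ with ⟨j₂, rfl⟩ | ⟨c₂, hc₂⟩
    · -- var = var
      refine ⟨0, ∅, fun k' _ C' _ =>
        ⟨Term.bdEqual (vterm n l j₁) (vterm n l j₂), fun a xs b ys H1 H2 => ?_⟩⟩
      have hM : (Term.bdEqual (vterm (L := L) (M := M) n l j₁)
          (vterm n l j₂)).Realize b ys ↔
          Sum.elim (fun i => b (i, (0 : Fin 1))) ys j₁
            = Sum.elim (fun i => b (i, (0 : Fin 1))) ys j₂ := by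
        rw [BoundedFormula.realize_bdEqual, realize_vterm, realize_vterm]
      rw [hM]
      exact H2 j₁ j₂
    · -- var = const
      refine ⟨0, {c₂}, fun k' _ C' hC' =>
        ⟨Term.bdEqual (vterm n l j₁) (cterm (τ c₂ 0)), fun a xs b ys H1 H2 => ?_⟩⟩
      have htree : (BoundedFormula.equal (Term.var j₁) t₂).Realize a xs ↔
          Sum.elim a xs j₁ = c₂ := by
        rw [show ((BoundedFormula.equal (Term.var j₁) t₂).Realize a xs ↔
          (Term.var j₁).realize (Sum.elim a xs) = t₂.realize (Sum.elim a xs)) from Iff.rfl,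
          hc₂]
        exact Iff.rfl
      have hM : (Term.bdEqual (vterm (L := L) (M := M) n l j₁)
          (cterm (τ c₂ 0))).Realize b ys ↔
          Sum.elim (fun i => b (i, (0 : Fin 1))) ys j₁ = τ c₂ 0 := by
        rw [BoundedFormula.realize_bdEqual, realize_vterm, realize_cterm]
      rw [htree, hM]
      exact (H1 j₁).2 c₂ (hC' (Finset.mem_singleton_self c₂))
    · -- const = var
      refine ⟨0, {c₁}, fun k' _ C' hC' =>
        ⟨Term.bdEqual (cterm (τ c₁ 0)) (vterm n l j₂), fun a xs b ys H1 H2 => ?_⟩⟩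
      have htree : (BoundedFormula.equal t₁ (Term.var j₂)).Realize a xs ↔
          c₁ = Sum.elim a xs j₂ := by
        rw [show ((BoundedFormula.equal t₁ (Term.var j₂)).Realize a xs ↔
          t₁.realize (Sum.elim a xs) = (Term.var j₂).realize (Sum.elim a xs)) from Iff.rfl,
          hc₁]
        exact Iff.rfl
      have hM : (Term.bdEqual (cterm (L := L) (τ c₁ 0))
          (vterm (M := M) n l j₂)).Realize b ys ↔
          τ c₁ 0 = Sum.elim (fun i => b (i, (0 : Fin 1))) ys j₂ := by
        rw [BoundedFormula.realize_bdEqual, realize_vterm, realize_cterm]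
      rw [htree, hM, eq_comm, @eq_comm _ (τ c₁ 0)]
      exact (H1 j₂).2 c₁ (hC' (Finset.mem_singleton_self c₁))
    · -- const = const
      by_cases hcc : c₁ = c₂
      · refine ⟨0, ∅, fun k' _ C' _ => ⟨⊤, fun a xs b ys _ _ => ?_⟩⟩
        rw [BoundedFormula.realize_top]
        refine iff_of_true ?_ trivial
        show t₁.realize (Sum.elim a xs) = t₂.realize (Sum.elim a xs)
        rw [hc₁, hc₂, hcc]
      · refine ⟨0, ∅, fun k' _ C' _ => ⟨⊥, fun a xs b ys _ _ => ?_⟩⟩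
        rw [BoundedFormula.realize_bot]
        refine iff_of_false ?_ not_false
        show ¬ t₁.realize (Sum.elim a xs) = t₂.realize (Sum.elim a xs)
        rw [hc₁, hc₂]
        exact hcc
  | @rel l arity R ts =>
    rcases R with R | e
    case inr => exact e.elim
    cases R with
    | U σ =>
      rcases term_cases (ts 0) with ⟨j, hj⟩ | ⟨c, hc⟩
      · -- variable argument
        refine ⟨σ.length, ∅, fun k' hk' C' _ =>
          ⟨BoundedFormula.relabel (fun _ : Fin 1 => Sum.map (fun i : Fin n => (i, (0 : Fin 1)))
              id j) (φX σ), fun a xs b ys H1 H2 => ?_⟩⟩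
        have htree : (BoundedFormula.rel (Sum.inl (treeRel.U σ)) ts).Realize a xs ↔
            Pref σ (Sum.elim a xs j) := by
          rw [show ((BoundedFormula.rel (Sum.inl (treeRel.U σ)) ts).Realize a xs ↔
            ∀ i : Fin σ.length, σ.get i = ((ts 0).realize (Sum.elim a xs)) i) from Iff.rfl]
          rw [hj]
          exact pref_iff_forall.symm
        have hM := realize_relabel_const (φX σ)
          (Sum.map (fun i : Fin n => (i, (0 : Fin 1))) id j) b ys
        rw [hM, hφX]
        refine htree.trans ?_
        have hval : Sum.elim b ys (Sum.map (fun i : Fin n => (i, (0 : Fin 1))) id j)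
            = Sum.elim (fun i => b (i, (0 : Fin 1))) ys j := by
          cases j <;> rfl
        rw [hval]
        exact (H1 j).1 σ hk'
      · -- constant argument
        by_cases hp : Pref σ c
        · refine ⟨0, ∅, fun k' _ C' _ => ⟨⊤, fun a xs b ys _ _ => ?_⟩⟩
          rw [BoundedFormula.realize_top]
          refine iff_of_true ?_ trivial
          show ∀ i : Fin σ.length, σ.get i = ((ts 0).realize (Sum.elim a xs)) i
          rw [hc]
          exact pref_iff_forall.mp hp
        · refine ⟨0, ∅, fun k' _ C' _ => ⟨⊥, fun a xs b ys _ _ => ?_⟩⟩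
          rw [BoundedFormula.realize_bot]
          refine iff_of_false ?_ not_false
          show ¬ ∀ i : Fin σ.length, σ.get i = ((ts 0).realize (Sum.elim a xs)) i
          rw [hc]
          exact fun h => hp (pref_iff_forall.mpr h)
  | @imp l φ₁ φ₂ ih₁ ih₂ =>
    obtain ⟨k₁, C₁, h₁⟩ := ih₁
    obtain ⟨k₂, C₂, h₂⟩ := ih₂
    refine ⟨max k₁ k₂, C₁ ∪ C₂, fun k' hk' C' hC' => ?_⟩
    obtain ⟨θ₁, hθ₁⟩ := h₁ k' (le_trans (le_max_left _ _) hk') C'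
      (le_trans (Finset.subset_union_left) hC')
    obtain ⟨θ₂, hθ₂⟩ := h₂ k' (le_trans (le_max_right _ _) hk') C'
      (le_trans (Finset.subset_union_right) hC')
    refine ⟨θ₁.imp θ₂, fun a xs b ys H1 H2 => ?_⟩
    rw [BoundedFormula.realize_imp, BoundedFormula.realize_imp,
      hθ₁ a xs b ys H1 H2, hθ₂ a xs b ys H1 H2]
  | @all l φ₁ ih =>
    obtain ⟨k₁, C₁, h₁⟩ := ih
    refine ⟨k₁, C₁, fun k' hk' C' hC' => ?_⟩
    obtain ⟨θ₁, hθ₁⟩ := h₁ k' hk' C' hC'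
    refine ⟨(((BoundedFormula.relabel
      (fun _ : Fin 1 => (Sum.inr (Fin.last l) : (Fin n × Fin 1) ⊕ Fin (l+1)))
      (deltaFormula φX k')) : L[[(Set.univ : Set M)]].BoundedFormula (Fin n × Fin 1) (l+1)).imp
        θ₁).all, fun a xs b ys H1 H2 => ?_⟩
    rw [BoundedFormula.realize_all]
    constructor
    · intro htree m
      rw [BoundedFormula.realize_imp, realize_relabel_const,
        realize_deltaFormula hφX]
      intro hmD0
      have hmD : m ∈ Dset X k' := by simpa using hmD0
      obtain ⟨γ, hGood, heq⟩ := extendM hsub hdisj hne hτ hτ0 k' C'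
        (Sum.elim a xs) (Sum.elim (fun i => b (i, (0 : Fin 1))) ys) H1 H2 m hmD
      have H1' : ∀ j : Fin n ⊕ Fin (l+1), Good X τ k' C'
          (Sum.elim a (Fin.snoc xs γ) j)
          (Sum.elim (fun i => b (i, (0 : Fin 1))) (Fin.snoc ys m) j) := by
        intro j
        rcases sum_fin_succ_cases j with ⟨j₀, rfl⟩ | rfl
        · rw [elim_snoc_map, elim_snoc_map]
          exact H1 j₀
        · rw [elim_snoc_last, elim_snoc_last]
          exact hGood
      have H2' : ∀ j j' : Fin n ⊕ Fin (l+1),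
          Sum.elim a (Fin.snoc xs γ) j = Sum.elim a (Fin.snoc xs γ) j' ↔
          Sum.elim (fun i => b (i, (0 : Fin 1))) (Fin.snoc ys m) j
            = Sum.elim (fun i => b (i, (0 : Fin 1))) (Fin.snoc ys m) j' := by
        intro j j'
        rcases sum_fin_succ_cases j with ⟨j₀, rfl⟩ | rfl <;>
          rcases sum_fin_succ_cases j' with ⟨j₀', rfl⟩ | rfl <;>
          simp only [elim_snoc_map, elim_snoc_last] <;>
          first
          | exact H2 j₀ j₀'
          | exact heq j₀
          | (rw [eq_comm, @eq_comm _ m]; exact heq j₀')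
          | exact iff_of_true rfl rfl
      exact (hθ₁ a (Fin.snoc xs γ) b (Fin.snoc ys m) H1' H2').mp (htree γ)
    · intro hMside γ
      obtain ⟨m, hmD, hGood, heq⟩ := extendC hsub hdisj hne hτ hτ0 k' C'
        (Sum.elim a xs) (Sum.elim (fun i => b (i, (0 : Fin 1))) ys) H1 H2 γ
      have hism := hMside m
      rw [BoundedFormula.realize_imp, realize_relabel_const,
        realize_deltaFormula hφX] at hism
      have hism' : θ₁.Realize b (Fin.snoc ys m) := hism (by simpa using hmD)
      have H1' : ∀ j : Fin n ⊕ Fin (l+1), Good X τ k' C'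
          (Sum.elim a (Fin.snoc xs γ) j)
          (Sum.elim (fun i => b (i, (0 : Fin 1))) (Fin.snoc ys m) j) := by
        intro j
        rcases sum_fin_succ_cases j with ⟨j₀, rfl⟩ | rfl
        · rw [elim_snoc_map, elim_snoc_map]
          exact H1 j₀
        · rw [elim_snoc_last, elim_snoc_last]
          exact hGood
      have H2' : ∀ j j' : Fin n ⊕ Fin (l+1),
          Sum.elim a (Fin.snoc xs γ) j = Sum.elim a (Fin.snoc xs γ) j' ↔
          Sum.elim (fun i => b (i, (0 : Fin 1))) (Fin.snoc ys m) j
            = Sum.elim (fun i => b (i, (0 : Fin 1))) (Fin.snoc ys m) j' := by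
        intro j j'
        rcases sum_fin_succ_cases j with ⟨j₀, rfl⟩ | rfl <;>
          rcases sum_fin_succ_cases j' with ⟨j₀', rfl⟩ | rfl <;>
          simp only [elim_snoc_map, elim_snoc_last] <;>
          first
          | exact H2 j₀ j₀'
          | exact heq j₀
          | (rw [eq_comm, @eq_comm _ m]; exact heq j₀')
          | exact iff_of_true rfl rfl
      exact (hθ₁ a (Fin.snoc xs γ) b (Fin.snoc ys m) H1' H2').mpr hism'

end Key

/-! ### The main lemma -/

theorem main_trace {L : Language} {M : Type*} [L.Structure M]
    (X : List Bool → Set M)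
    (φX : List Bool → L[[(Set.univ : Set M)]].Formula (Fin 1))
    (hφX : ∀ σ (v : Fin 1 → M), Formula.Realize (φX σ) v ↔ v 0 ∈ X σ)
    (hsub : ∀ (σ : List Bool) (b : Bool), X (σ ++ [b]) ⊆ X σ)
    (hdisj : ∀ σ : List Bool, X (σ ++ [false]) ∩ X (σ ++ [true]) = ∅)
    (hne : ∀ σ : List Bool, (X σ).Nonempty)
    (τ : Cantor → Fin 1 → M)
    (hτ : ∀ (α : Cantor) (n : ℕ), τ α 0 ∈ X (pre α n))
    (hτ0 : ∀ α β : Cantor, τ α 0 = τ β 0 → α = β) :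
    TraceDefinesVia L treeLang M (ℕ → Bool) 1 τ := by
  intro n Xset hdefU
  obtain ⟨φ, rfl⟩ := hdefU
  obtain ⟨k, C, hk⟩ := key_translation X φX hφX hsub hdisj hne τ hτ hτ0 n 0 φ
  obtain ⟨θ, hθ⟩ := hk k le_rfl C (Finset.Subset.refl C)
  refine ⟨setOf (Formula.Realize θ), ⟨θ, rfl⟩, fun a => ?_⟩
  have H1 : ∀ j : Fin n ⊕ Fin 0, Good X τ k C (Sum.elim a default j)
      (Sum.elim (fun i => (fun p : Fin n × Fin 1 => τ (a p.1) p.2) (i, (0 : Fin 1)))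
        default j) := by
    intro j
    rcases j with i | x
    · exact good_tau hsub hdisj hτ hτ0 k C (a i)
    · exact x.elim0
  have H2 : ∀ j j' : Fin n ⊕ Fin 0, Sum.elim a default j = Sum.elim a default j' ↔
      Sum.elim (fun i => (fun p : Fin n × Fin 1 => τ (a p.1) p.2) (i, (0 : Fin 1))) default j
        = Sum.elim (fun i => (fun p : Fin n × Fin 1 => τ (a p.1) p.2) (i, (0 : Fin 1)))
          default j' := by
    intro j j'
    rcases j with i | x
    · rcases j' with i' | x'
      · simp only [Sum.elim_inl]
        constructor
        · intro h; rw [h]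
        · intro h; exact hτ0 _ _ h
      · exact x'.elim0
    · exact x.elim0
  have h := hθ a default (fun p => τ (a p.1) p.2) default H1 H2
  constructor
  · intro ha'
    have h1 : Formula.Realize φ a := ha'
    exact (realize_zero_congr θ _ _ _).mp (h.mp ((realize_zero_congr φ _ _ _).mp h1))
  · intro hb'
    have h1 : Formula.Realize θ (fun p => τ (a p.1) p.2) := hb'
    show Formula.Realize φ a
    exact (realize_zero_congr φ _ _ _).mp (h.mpr ((realize_zero_congr θ _ _ _).mp h1))

end TTAux

open TTAux in
/-- If `M` is `ℵ₁`-saturated and carries a definable binary tree of nonempty definable sets,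
then `M` trace defines the binary tree structure `𝒰` on `{0,1}^ω`. -/
theorem trace_defines_tree_structure
    (L : Language) (M : Type*) [L.Structure M]
    (hsat : Aleph1Saturated L M)
    (X : List Bool → Set M)
    (hdef : ∀ σ : List Bool, Set.Definable₁ (Set.univ : Set M) L (X σ))
    (hne : ∀ σ : List Bool, (X σ).Nonempty)
    (hsub0 : ∀ σ : List Bool, X (σ ++ [false]) ⊆ X σ)
    (hsub1 : ∀ σ : List Bool, X (σ ++ [true]) ⊆ X σ)
    (hdisj : ∀ σ : List Bool, X (σ ++ [false]) ∩ X (σ ++ [true]) = ∅) :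
    ∃ τ : (ℕ → Bool) → Fin 1 → M, Function.Injective τ ∧
      TraceDefinesVia L treeLang M (ℕ → Bool) 1 τ := by
  classical
  have hsub : ∀ (σ : List Bool) (b : Bool), X (σ ++ [b]) ⊆ X σ := by
    intro σ b
    cases b
    · exact hsub0 σ
    · exact hsub1 σ
  have hdef' : ∀ σ : List Bool, ∃ φ : L[[(Set.univ : Set M)]].Formula (Fin 1),
      ∀ v : Fin 1 → M, Formula.Realize φ v ↔ v 0 ∈ X σ := by
    intro σ
    obtain ⟨φ, hφ⟩ := hdef σ
    exact ⟨φ, fun v => (Set.ext_iff.mp hφ v).symm⟩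
  choose φX hφX using hdef'
  have hex : ∀ α : Cantor, ∃ a : Fin 1 → M, ∀ j : ℕ, a 0 ∈ X (pre α j) := by
    intro α
    have hfin : ∀ (s : Finset (L[[(Set.univ : Set M)]].Formula (Fin 1))),
        (↑s ⊆ Set.range fun j : ℕ => φX (pre α j)) →
        ∃ N : ℕ, ∀ φ ∈ s, ∀ v : Fin 1 → M, v 0 ∈ X (pre α N) → Formula.Realize φ v := by
      intro s
      induction s using Finset.induction_on with
      | empty => exact fun _ => ⟨0, fun φ hφ => absurd hφ (Finset.notMem_empty φ)⟩
      | @insert φ0 s hnot ih =>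
        intro hsub'
        obtain ⟨N, hN⟩ := ih (fun x hx => hsub' (by
          rw [Finset.coe_insert]
          exact Set.mem_insert_of_mem _ hx))
        obtain ⟨j, hj⟩ := hsub' (by
          rw [Finset.coe_insert]
          exact Set.mem_insert _ _)
        refine ⟨max N j, fun ψ hψ v hv => ?_⟩
        rcases Finset.mem_insert.mp hψ with rfl | hψ
        · rw [← hj]
          exact (hφX _ v).mpr
            (subset_of_prefix X hsub (prefix_pre α (le_max_right N j)) hv)
        · exact hN ψ hψ v (subset_of_prefix X hsub (prefix_pre α (le_max_left N j)) hv)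
    obtain ⟨aa, haa⟩ := hsat (Set.range fun j : ℕ => φX (pre α j))
      (Set.countable_range _)
      (fun s hs => by
        obtain ⟨N, hN⟩ := hfin s hs
        exact ⟨fun _ => (hne (pre α N)).choose,
          fun φ hφ => hN φ hφ _ (hne (pre α N)).choose_spec⟩)
    exact ⟨aa, fun j => (hφX (pre α j) aa).mp (haa _ ⟨j, rfl⟩)⟩
  choose τ hτ using hex
  have hτ0 : ∀ α β : Cantor, τ α 0 = τ β 0 → α = β := by
    intro α β h
    have key : ∀ n, α n = β n := by
      intro n
      induction n using Nat.strong_induction_on with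
      | _ n ih =>
        have hpre : pre α n = pre β n := by
          apply List.ext_getElem (by simp)
          intro i h1 h2
          rw [getElem_pre, getElem_pre]
          exact ih i (by simpa using h1)
        by_contra hne'
        have h1 : τ α 0 ∈ X (pre α n ++ [α n]) := by
          rw [← pre_succ]; exact hτ α (n+1)
        have h2 : τ α 0 ∈ X (pre α n ++ [β n]) := by
          rw [h, hpre, ← pre_succ]; exact hτ β (n+1)
        have hd := hdisj (pre α n)
        rw [Set.eq_empty_iff_forall_notMem] at hd
        rcases Bool.eq_false_or_eq_true (α n) with ha | ha <;>
          rcases Bool.eq_false_or_eq_true (β n) with hb | hb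
        · exact hne' (ha.trans hb.symm)
        · rw [ha] at h1; rw [hb] at h2; exact hd _ ⟨h2, h1⟩
        · rw [ha] at h1; rw [hb] at h2; exact hd _ ⟨h1, h2⟩
        · exact hne' (ha.trans hb.symm)
    exact funext key
  have hinj : Function.Injective τ := fun α β h => hτ0 α β (congrFun h 0)
  exact ⟨τ, hinj, main_trace X φX hφX hsub hdisj hne τ hτ hτ0⟩
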